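/- Let A = ℚ[x₁, x₂, ...] be graded with deg(xₙ) = n, let aₙ = dim_ℚ A_n (the number of partitions of n), and let d be the derivation with d(xₙ) = x_{n-1} (x₀ = 0). Let J = ker d with graded pieces Jₙ of dimension jₙ. Then for all n ≥ 2, jₙ = aₙ - a_{n-1}, while j₀ = j₁ = 1. -/

import Mathlib

open MvPolynomial

/-- The derivation `d` on `A = ℚ[x₁, x₂, …]` (with `X i` standing for `x_{i+1}`)
determined by `d x₁ = 0` and `d xₙ = x_{n-1}` for `n ≥ 2`. -/
noncomputable def dDer : Derivation ℚ (MvPolynomial ℕ ℚ) (MvPolynomial ℕ ℚ) :=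
  MvPolynomial.mkDerivation ℚ (fun i => if i = 0 then 0 else X (i - 1))

/-- The degree-`n` graded piece `Aₙ` of `A` (where `xₙ = X (n-1)` has degree `n`). -/
noncomputable def Apiece (n : ℕ) : Submodule ℚ (MvPolynomial ℕ ℚ) :=
  weightedHomogeneousSubmodule ℚ (fun i : ℕ => i + 1) n

/-- The degree-`n` graded piece `Jₙ` of `J = ker d`. -/
noncomputable def Jpiece (n : ℕ) : Submodule ℚ (MvPolynomial ℕ ℚ) :=
  Apiece n ⊓ LinearMap.ker dDer.toLinearMap

/-- `aₙ = dim_ℚ Aₙ` (the number of partitions of `n`). -/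
noncomputable def aDim (n : ℕ) : ℕ := Module.finrank ℚ (Apiece n)

/-- `jₙ = dim_ℚ Jₙ`. -/
noncomputable def jDim (n : ℕ) : ℕ := Module.finrank ℚ (Jpiece n)

namespace StmtAux

open Finsupp Module

noncomputable abbrev wt : (ℕ →₀ ℕ) →+ ℕ := Finsupp.weight (fun i : ℕ => i + 1)

lemma wt_single (i k : ℕ) : wt (Finsupp.single i k) = k * (i + 1) := by
  simp [Finsupp.weight, Finsupp.linearCombination_single, smul_eq_mul]

lemma wt_le_of_mem {α : ℕ →₀ ℕ} {i : ℕ} (h : α i ≠ 0) : i + 1 ≤ wt α :=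
  Finsupp.le_weight_of_ne_zero' (M := ℕ) (fun j : ℕ => j + 1) h

lemma apply_le_wt (α : ℕ →₀ ℕ) (i : ℕ) : α i ≤ wt α :=
  Finsupp.le_weight _ (by omega) α

lemma wt_move {α : ℕ →₀ ℕ} {i : ℕ} (j : ℕ) (hi : α i ≠ 0) :
    wt (α - Finsupp.single i 1 + Finsupp.single j 1) + (i + 1) = wt α + (j + 1) := by
  have hle : Finsupp.single i 1 ≤ α := by
    rw [Finsupp.single_le_iff]; omega
  have h1 : wt (α - Finsupp.single i 1) + wt (Finsupp.single i 1) = wt α := by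
    rw [← map_add, tsub_add_cancel_of_le hle]
  rw [map_add, wt_single] at *
  omega

lemma move_apply (α : ℕ →₀ ℕ) (i j s : ℕ) :
    (α - Finsupp.single i 1 + Finsupp.single j 1 : ℕ →₀ ℕ) s
      = α s - (if i = s then 1 else 0) + (if j = s then 1 else 0) := by
  rw [Finsupp.add_apply, Finsupp.tsub_apply, Finsupp.single_apply, Finsupp.single_apply]

lemma move_cancel {α : ℕ →₀ ℕ} {i : ℕ} (j : ℕ) (hi : α i ≠ 0) :
    (α - Finsupp.single i 1 + Finsupp.single j 1) - Finsupp.single j 1 + Finsupp.single i 1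
      = α := by
  rw [add_tsub_cancel_right, tsub_add_cancel_of_le (by rw [Finsupp.single_le_iff]; omega)]

lemma mem_Apiece_monomial {α : ℕ →₀ ℕ} {n : ℕ} (h : wt α = n) (c : ℚ) :
    monomial α c ∈ Apiece n :=
  isWeightedHomogeneous_monomial _ _ _ h

lemma finite_wt_eq (n : ℕ) : {α : ℕ →₀ ℕ | wt α = n}.Finite := by
  have h : Set.InjOn (fun (α : ℕ →₀ ℕ) (i : Fin n) => (⟨min (α i) n, Nat.lt_succ_of_le (min_le_right _ _)⟩ : Fin (n+1)))
      {α : ℕ →₀ ℕ | wt α = n} := by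
    intro α hα β hβ h
    have hb : ∀ γ : ℕ →₀ ℕ, wt γ = n → ∀ i, γ i ≤ n := fun γ hγ i => hγ ▸ apply_le_wt γ i
    have hs : ∀ γ : ℕ →₀ ℕ, wt γ = n → ∀ i, n ≤ i → γ i = 0 := by
      intro γ hγ i hi
      by_contra hne
      have := wt_le_of_mem hne
      omega
    ext i
    rcases lt_or_ge i n with hi | hi
    · have h1 := hb α hα i; have h2 := hb β hβ i
      have := congrFun h ⟨i, hi⟩
      simpa [Fin.ext_iff, min_eq_left h1, min_eq_left h2,
        Nat.mod_eq_of_lt (Nat.lt_succ_of_le h1), Nat.mod_eq_of_lt (Nat.lt_succ_of_le h2)]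
        using this
    · rw [hs α hα i hi, hs β hβ i hi]
  exact Set.Finite.of_finite_image (Set.toFinite _) h

lemma Apiece_le_span (n : ℕ) :
    Apiece n ≤ Submodule.span ℚ ((fun α => monomial α (1:ℚ)) '' {α | wt α = n}) := by
  intro φ hφ
  rw [← support_sum_monomial_coeff φ]
  refine Submodule.sum_mem _ fun α hα => ?_
  have hwt : wt α = n := hφ (MvPolynomial.mem_support_iff.mp hα)
  have : monomial α (coeff α φ) = (coeff α φ) • monomial α (1:ℚ) := by
    rw [MvPolynomial.smul_monomial, smul_eq_mul, mul_one]
  rw [this]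
  exact Submodule.smul_mem _ _ (Submodule.subset_span ⟨α, hwt, rfl⟩)

instance Apiece_fd (n : ℕ) : FiniteDimensional ℚ (Apiece n) := by
  haveI := FiniteDimensional.span_of_finite ℚ
    ((finite_wt_eq n).image (fun α => monomial α (1:ℚ)))
  exact Submodule.finiteDimensional_of_le (Apiece_le_span n)

lemma dDer_monomial (α : ℕ →₀ ℕ) :
    dDer (monomial α (1:ℚ)) =
      ∑ i ∈ α.support.erase 0,
        monomial (α - Finsupp.single i 1 + Finsupp.single (i-1) 1) ((α i : ℚ)) := by
  rw [dDer, mkDerivation_monomial, one_smul, Finsupp.sum]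
  rw [← Finset.sum_erase (a := 0) _ (by simp)]
  refine Finset.sum_congr rfl fun i hi => ?_
  have hi0 : i ≠ 0 := (Finset.mem_erase.mp hi).1
  rw [if_neg hi0, X, smul_eq_mul, monomial_mul, mul_one]

lemma dmapsto (n : ℕ) : ∀ φ ∈ Apiece n, dDer.toLinearMap φ ∈ Apiece (n-1) := by
  have : Apiece n ≤ Submodule.comap dDer.toLinearMap (Apiece (n-1)) := by
    refine le_trans (Apiece_le_span n) (Submodule.span_le.mpr ?_)
    rintro _ ⟨α, hα, rfl⟩
    simp only [SetLike.mem_coe, Submodule.mem_comap]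
    show dDer (monomial α (1:ℚ)) ∈ Apiece (n-1)
    rw [dDer_monomial]
    refine Submodule.sum_mem _ fun j hj => ?_
    obtain ⟨hj0, hjs⟩ := Finset.mem_erase.mp hj
    have hαj : α j ≠ 0 := Finsupp.mem_support_iff.mp hjs
    have h1 := wt_move (α := α) (i := j) (j-1) hαj
    have h2 : wt α = n := hα
    exact mem_Apiece_monomial (by omega) _
  intro φ hφ
  exact this hφ

/-- The restriction of `d` to a map `Aₙ → A_{n-1}`. -/
noncomputable def Dmap (n : ℕ) : Apiece n →ₗ[ℚ] Apiece (n-1) :=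
  dDer.toLinearMap.restrict (dmapsto n)

lemma key (m : ℕ) : ∀ (k : ℕ) (α : ℕ →₀ ℕ) (hwt : wt α = m) (hne : α.support.Nonempty),
    m ≤ α.support.max' hne + 1 + k →
    monomial α (1:ℚ) ∈ Submodule.map dDer.toLinearMap (Apiece (m+1)) := by
  intro k
  induction k using Nat.strong_induction_on with
  | _ k IH =>
  intro α hwt hne hbound
  set i := α.support.max' hne with hidef
  have hαi : α i ≠ 0 := Finsupp.mem_support_iff.mp (α.support.max'_mem hne)
  have htop : α (i+1) = 0 := by
    by_contra h
    have := Finset.le_max' α.support (i+1) (Finsupp.mem_support_iff.mpr h)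
    omega
  set β := α - Finsupp.single i 1 + Finsupp.single (i+1) 1 with hβdef
  have hβtop : β (i+1) = 1 := by
    rw [hβdef, move_apply, htop, if_neg (by omega), if_pos rfl]
  have hwtβ : wt β = m + 1 := by
    have := wt_move (α := α) (i := i) (i+1) hαi
    rw [← hβdef] at this; omega
  have hβmem : monomial β (1:ℚ) ∈ Apiece (m+1) := mem_Apiece_monomial hwtβ 1
  have hsupβ : ∀ j ∈ β.support, j ≤ i + 1 := by
    intro j hj
    by_contra h
    push_neg at h
    have hj' := Finsupp.mem_support_iff.mp hj
    rw [hβdef, move_apply, if_neg (by omega), if_neg (by omega)] at hj'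
    simp only [Nat.sub_zero, Nat.add_zero] at hj'
    have : j ≤ i := Finset.le_max' _ j (Finsupp.mem_support_iff.mpr hj')
    omega
  have hmem_i1 : (i+1) ∈ β.support.erase 0 :=
    Finset.mem_erase.mpr ⟨by omega, Finsupp.mem_support_iff.mpr (by rw [hβtop]; exact one_ne_zero)⟩
  have hsum := dDer_monomial β
  rw [← Finset.add_sum_erase _ _ hmem_i1] at hsum
  have hcan : β - Finsupp.single (i+1) 1 + Finsupp.single ((i+1)-1) 1 = α := by
    rw [hβdef]
    simpa using move_cancel (i := i) (i+1) hαi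
  rw [hcan, hβtop, Nat.cast_one] at hsum
  have heq : monomial α (1:ℚ) = dDer (monomial β 1)
      - ∑ j ∈ (β.support.erase 0).erase (i+1),
          monomial (β - Finsupp.single j 1 + Finsupp.single (j-1) 1) ((β j : ℚ)) :=
    eq_sub_of_add_eq hsum.symm
  rw [heq]
  refine Submodule.sub_mem _ (Submodule.mem_map_of_mem hβmem) (Submodule.sum_mem _ ?_)
  intro j hj
  obtain ⟨hji1, hj0, hjs⟩ : j ≠ i + 1 ∧ j ≠ 0 ∧ j ∈ β.support := by
    obtain ⟨h1, h2⟩ := Finset.mem_erase.mp hj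
    obtain ⟨h3, h4⟩ := Finset.mem_erase.mp h2
    exact ⟨h1, h3, h4⟩
  have hβj : β j ≠ 0 := Finsupp.mem_support_iff.mp hjs
  have hjle : j ≤ i := by
    have := hsupβ j hjs; omega
  have hle2 : Finsupp.single (i+1) 1 + Finsupp.single j 1 ≤ β := by
    rw [Finsupp.le_def]
    intro s
    rw [Finsupp.add_apply, Finsupp.single_apply, Finsupp.single_apply]
    rcases eq_or_ne s (i+1) with rfl | hs1
    · rw [if_pos rfl, if_neg (by omega), hβtop]; omega
    · rcases eq_or_ne s j with rfl | hs2
      · rw [if_neg (by omega), if_pos rfl]; omega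
      · rw [if_neg (by omega), if_neg (by omega)]; omega
  obtain ⟨δ, hδ⟩ := exists_add_of_le hle2
  have hwt2 : wt β = ((i+1)+1) + (j+1) + wt δ := by
    rw [hδ, map_add, map_add, wt_single, wt_single]; omega
  have hjk : j + 1 ≤ k := by omega
  set γ := β - Finsupp.single j 1 + Finsupp.single (j-1) 1 with hγdef
  have hwtγ : wt γ = m := by
    have := wt_move (α := β) (i := j) (j-1) hβj
    rw [← hγdef] at this; omega
  have hγi1 : γ (i+1) = 1 := by
    rw [hγdef, move_apply, if_neg (by omega), if_neg (by omega), hβtop]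
  have hneγ : γ.support.Nonempty :=
    ⟨i+1, Finsupp.mem_support_iff.mpr (by rw [hγi1]; exact one_ne_zero)⟩
  have hmaxγ : i + 1 ≤ γ.support.max' hneγ :=
    Finset.le_max' _ _ (Finsupp.mem_support_iff.mpr (by rw [hγi1]; exact one_ne_zero))
  have hres := IH (k-1) (by omega) γ hwtγ hneγ (by omega)
  have : monomial γ ((β j : ℚ)) = (β j : ℚ) • monomial γ (1:ℚ) := by
    rw [MvPolynomial.smul_monomial, smul_eq_mul, mul_one]
  rw [this]
  exact Submodule.smul_mem _ _ hres

lemma Dmap_surj {n : ℕ} (hn : 2 ≤ n) : LinearMap.range (Dmap n) = ⊤ := by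
  rw [LinearMap.range_eq_top]
  intro y
  have hy : (y : MvPolynomial ℕ ℚ) ∈ Apiece (n-1) := y.2
  have hle : Apiece (n-1) ≤ Submodule.map dDer.toLinearMap (Apiece ((n-1)+1)) := by
    refine le_trans (Apiece_le_span (n-1)) (Submodule.span_le.mpr ?_)
    rintro _ ⟨α, hα, rfl⟩
    have hα' : wt α = n - 1 := hα
    have hne : α.support.Nonempty := by
      rw [Finsupp.support_nonempty_iff]
      intro h0
      rw [h0, map_zero] at hα'
      omega
    exact key (n-1) (n-1) α hα' hne (by omega)
  have hn1 : (n-1)+1 = n := by omega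
  rw [hn1] at hle
  obtain ⟨x, hx, hxy⟩ := hle hy
  exact ⟨⟨x, hx⟩, Subtype.ext hxy⟩

set_option synthInstance.maxHeartbeats 1000000 in
lemma finrank_ker_Dmap (n : ℕ) :
    Module.finrank ℚ (LinearMap.ker (Dmap n)) = jDim n := by
  have e1 : LinearMap.ker (Dmap n) = Submodule.comap (Apiece n).subtype (Jpiece n) := by
    rw [Dmap, LinearMap.ker_restrict, Jpiece, Submodule.comap_inf,
      Submodule.comap_subtype_self, top_inf_eq]
  rw [e1, jDim]
  exact (Submodule.comapSubtypeEquivOfLe (inf_le_left : Jpiece n ≤ Apiece n)).finrank_eq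

lemma main_ge2 {n : ℕ} (hn : 2 ≤ n) : aDim (n-1) + jDim n = aDim n := by
  have h := LinearMap.finrank_range_add_finrank_ker (Dmap n)
  rw [Dmap_surj hn, finrank_top, finrank_ker_Dmap] at h
  rw [aDim, aDim]
  exact h

lemma Apiece_zero : Apiece 0 = Submodule.span ℚ {(1 : MvPolynomial ℕ ℚ)} := by
  apply le_antisymm
  · refine le_trans (Apiece_le_span 0) (Submodule.span_le.mpr ?_)
    rintro _ ⟨α, hα, rfl⟩
    have hα0 : α = 0 := by
      ext s
      by_contra h
      have := wt_le_of_mem (α := α) (i := s) h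
      rw [Set.mem_setOf_eq] at hα
      omega
    subst hα0
    simp only [Set.mem_singleton_iff]
    exact Submodule.subset_span (by simp [monomial_zero'])
  · rw [Submodule.span_le, Set.singleton_subset_iff]
    exact isWeightedHomogeneous_one ℚ _

lemma Apiece_one : Apiece 1 = Submodule.span ℚ {(X 0 : MvPolynomial ℕ ℚ)} := by
  apply le_antisymm
  · refine le_trans (Apiece_le_span 1) (Submodule.span_le.mpr ?_)
    rintro _ ⟨α, hα, rfl⟩
    rw [Set.mem_setOf_eq] at hα
    have hα0 : α = Finsupp.single 0 1 := by
      ext s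
      rcases Nat.eq_zero_or_pos s with rfl | hs
      · have h1 := apply_le_wt α 0
        have h2 : α 0 ≠ 0 := by
          by_contra h0
          have : ∀ s, α s = 0 := by
            intro s
            by_contra h
            have := wt_le_of_mem (α := α) (i := s) h
            rcases Nat.eq_zero_or_pos s with rfl | hs'
            · exact h h0
            · omega
          have : α = 0 := Finsupp.ext this
          rw [this, map_zero] at hα
          omega
        have h3 : wt α = 1 := hα
        have h4 : α 0 * 1 ≤ wt α := by
          have := wt_le_of_mem h2
          calc α 0 * 1 = α 0 := by ring
          _ ≤ wt α := apply_le_wt α 0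
        simp [Finsupp.single_apply]
        omega
      · have : α s = 0 := by
          by_contra h
          have := wt_le_of_mem (α := α) (i := s) h
          omega
        rw [this, Finsupp.single_apply, if_neg (by omega)]
    subst hα0
    exact Submodule.subset_span (by simp [X])
  · rw [Submodule.span_le, Set.singleton_subset_iff]
    exact isWeightedHomogeneous_X ℚ _ 0

lemma dDer_one : dDer (1 : MvPolynomial ℕ ℚ) = 0 := dDer.map_one_eq_zero

lemma dDer_X0 : dDer (X 0 : MvPolynomial ℕ ℚ) = 0 := by
  rw [dDer, mkDerivation_X, if_pos rfl]

lemma jDim_zero : jDim 0 = 1 := by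
  have hJ : Jpiece 0 = Apiece 0 := by
    refine le_antisymm inf_le_left (le_inf le_rfl ?_)
    rw [Apiece_zero, Submodule.span_le, Set.singleton_subset_iff]
    simp only [SetLike.mem_coe, LinearMap.mem_ker]
    exact dDer_one
  rw [jDim, hJ, Apiece_zero]
  exact finrank_span_singleton one_ne_zero

lemma jDim_one : jDim 1 = 1 := by
  have hJ : Jpiece 1 = Apiece 1 := by
    refine le_antisymm inf_le_left (le_inf le_rfl ?_)
    rw [Apiece_one, Submodule.span_le, Set.singleton_subset_iff]
    simp only [SetLike.mem_coe, LinearMap.mem_ker]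
    exact dDer_X0
  rw [jDim, hJ, Apiece_one]
  exact finrank_span_singleton (X_ne_zero 0)

end StmtAux

/-- For all `n ≥ 2`, `jₙ = aₙ - a_{n-1}`, while `j₀ = j₁ = 1`. -/
theorem stmt_1 :
    (∀ n : ℕ, 2 ≤ n → (jDim n : ℤ) = (aDim n : ℤ) - (aDim (n - 1) : ℤ)) ∧
      jDim 0 = 1 ∧ jDim 1 = 1 := by
  refine ⟨fun n hn => ?_, StmtAux.jDim_zero, StmtAux.jDim_one⟩
  have := StmtAux.main_ge2 hn
  omega
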